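/- Fix p* ∈ [1,∞). For any n-point set P = {x₁,…,x_n} ⊂ [0,1], the L_{p*}-discrepancy (∫₀¹ |Δ_P(t)|^{p*} dt)^{1/p*} is at least 1/(2·(p*+1)^{1/p*}·n), with equality for the midpoint nodes x_j = (2j-1)/(2n). -/

import Mathlib

open MeasureTheory

private lemma aux_card_lt (n k : ℕ) (hk : k ≤ n) :
    (Finset.univ.filter (fun j : Fin n => (j:ℕ) < k)).card = k := by
  have h1 : (Finset.univ.filter (fun j : Fin n => (j:ℕ) < k)).card
      = ((Finset.range n).filter (fun j => j < k)).card := by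
    refine Finset.card_nbij (fun j => (j:ℕ)) ?_ ?_ ?_
    · intro a ha; simp at ha ⊢; omega
    · intro a _ b _ h; exact Fin.val_injective h
    · intro a ha; simp at ha ⊢; exact ⟨⟨a, ha.1⟩, ha.2, rfl⟩
  have h2 : ((Finset.range n).filter (fun j => j < k)) = Finset.range k := by
    ext j; simp; omega
  rw [h1, h2, Finset.card_range]

theorem midpoint_minimizes_Lp_discrepancy (n : ℕ) (hn : 0 < n) (p : ℝ) (hp : 1 ≤ p) :
    (∀ x : Fin n → ℝ, (∀ j, x j ∈ Set.Icc (0 : ℝ) 1) →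
      1 / (2 * (p + 1) ^ (1 / p) * n) ≤
        (∫ t in (0:ℝ)..1,
          |((Finset.univ.filter (fun j : Fin n => x j < t)).card : ℝ) / n - t| ^ p) ^ (1 / p)) ∧
    (∫ t in (0:ℝ)..1,
        |((Finset.univ.filter
          (fun j : Fin n => (2 * ((j : ℕ) : ℝ) + 1) / (2 * n) < t)).card : ℝ) / n - t| ^ p) ^ (1 / p)
      = 1 / (2 * (p + 1) ^ (1 / p) * n) := by
  have hp0 : (0:ℝ) < p := lt_of_lt_of_le one_pos hp
  have hN : (0:ℝ) < (n:ℝ) := by exact_mod_cast hn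
  have h2N : (0:ℝ) < 2*(n:ℝ) := by linarith
  set a : ℕ → ℝ := fun i => (i:ℝ) / (2*(n:ℝ)) with ha_def
  have ha0 : a 0 = 0 := by simp [ha_def]
  have ha1 : a (2*n) = 1 := by
    simp only [ha_def]; push_cast; field_simp
  have hlen : ∀ i : ℕ, a (i+1) - a i = 1/(2*(n:ℝ)) := by
    intro i; simp only [ha_def]; push_cast; ring
  have ha_le : ∀ i : ℕ, a i ≤ a (i+1) := by
    intro i
    have h1 := hlen i
    have h2 : (0:ℝ) < 1/(2*(n:ℝ)) := by positivity
    linarith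
  have haeven : ∀ k : ℕ, a (2*k) = (k:ℝ)/n := by
    intro k; simp only [ha_def]; push_cast
    rw [div_eq_div_iff h2N.ne' hN.ne']; ring
  have haodd : ∀ k : ℕ, a (2*k+1) = (k:ℝ)/n + 1/(2*n) := by
    intro k; simp only [ha_def]; push_cast
    field_simp
  have haodd2 : ∀ k : ℕ, a (2*k+2) = (k:ℝ)/n + 1/n := by
    intro k; simp only [ha_def]; push_cast
    field_simp
  have haIcc : ∀ i : ℕ, i ≤ 2*n → a i ∈ Set.Icc (0:ℝ) 1 := by
    intro i hi
    constructor
    · simp only [ha_def]; positivity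
    · simp only [ha_def]
      rw [div_le_one h2N]
      exact_mod_cast hi
  -- measurability and integrability of the generic integrand
  have hrpow_cont : Continuous fun y : ℝ => y ^ p := by
    rw [continuous_iff_continuousAt]; intro t
    exact Real.continuousAt_rpow_const _ _ (Or.inr hp0.le)
  have hphi_meas : ∀ x : Fin n → ℝ,
      Measurable (fun t : ℝ =>
        |((Finset.univ.filter (fun j : Fin n => x j < t)).card : ℝ) / n - t| ^ p) := by
    intro x
    have hmono : Monotone (fun t : ℝ =>
        ((Finset.univ.filter (fun j : Fin n => x j < t)).card : ℝ)) := by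
      intro s t hst
      have hsub : (Finset.univ.filter (fun j : Fin n => x j < s)).card
          ≤ (Finset.univ.filter (fun j : Fin n => x j < t)).card :=
        Finset.card_le_card (Finset.monotone_filter_right _
          (fun j _ (h : x j < s) => lt_of_lt_of_le h hst))
      dsimp only
      exact_mod_cast hsub
    exact hrpow_cont.measurable.comp (((hmono.measurable.div_const _).sub measurable_id).abs)
  have hcardle : ∀ (x : Fin n → ℝ) (t : ℝ),
      ((Finset.univ.filter (fun j : Fin n => x j < t)).card : ℝ) ≤ n := by
    intro x t
    have : (Finset.univ.filter (fun j : Fin n => x j < t)).card ≤ n := by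
      simpa using Finset.card_filter_le Finset.univ (fun j : Fin n => x j < t)
    exact_mod_cast this
  have hii : ∀ (x : Fin n → ℝ) (u v : ℝ), u ∈ Set.Icc (0:ℝ) 1 → v ∈ Set.Icc (0:ℝ) 1 →
      IntervalIntegrable (fun t : ℝ =>
        |((Finset.univ.filter (fun j : Fin n => x j < t)).card : ℝ) / n - t| ^ p)
        volume u v := by
    intro x u v hu hv
    rw [intervalIntegrable_iff]
    have hconst : IntegrableOn (fun _ : ℝ => (1:ℝ)) (Set.uIoc u v) volume := by
      rw [integrableOn_const_iff]
      exact Or.inr measure_Ioc_lt_top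
    refine hconst.mono' (hphi_meas x).aestronglyMeasurable ?_
    filter_upwards [ae_restrict_mem measurableSet_uIoc] with t ht
    have ht' : t ∈ Set.Icc (0:ℝ) 1 := by
      have hsub : Set.uIoc u v ⊆ Set.Icc (0:ℝ) 1 :=
        Set.Ioc_subset_Icc_self.trans
          (Set.Icc_subset_Icc (le_min hu.1 hv.1) (max_le hu.2 hv.2))
      exact hsub ht
    have hc0 : (0:ℝ) ≤ ((Finset.univ.filter (fun j : Fin n => x j < t)).card : ℝ) / n := by
      positivity
    have hc1 : ((Finset.univ.filter (fun j : Fin n => x j < t)).card : ℝ) / n ≤ 1 :=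
      (div_le_one hN).2 (hcardle x t)
    have habs : |((Finset.univ.filter (fun j : Fin n => x j < t)).card : ℝ) / n - t| ≤ 1 :=
      abs_sub_le_iff.2 ⟨by linarith [ht'.1], by linarith [ht'.2]⟩
    rw [Real.norm_eq_abs, abs_of_nonneg (Real.rpow_nonneg (abs_nonneg _) p)]
    exact Real.rpow_le_one (abs_nonneg _) habs hp0.le
  have hsplit : ∀ x : Fin n → ℝ,
      (∫ t in (0:ℝ)..1,
        |((Finset.univ.filter (fun j : Fin n => x j < t)).card : ℝ) / n - t| ^ p)
      = ∑ i ∈ Finset.range (2*n), ∫ t in a i..a (i+1),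
        |((Finset.univ.filter (fun j : Fin n => x j < t)).card : ℝ) / n - t| ^ p := by
    intro x
    rw [show (0:ℝ) = a 0 from ha0.symm, show (1:ℝ) = a (2*n) from ha1.symm]
    exact (intervalIntegral.sum_integral_adjacent_intervals (fun i hi =>
      hii x _ _ (haIcc i (by omega)) (haIcc (i+1) (by omega)))).symm
  -- the basic integral over a half-cell
  have hbase : ∫ s in (0:ℝ)..(1/(2*(n:ℝ))), s ^ p = (1/(2*(n:ℝ)))^(p+1)/(p+1) := by
    rw [integral_rpow (Or.inl (by linarith)), Real.zero_rpow (by linarith), sub_zero]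
  have heven_int : ∀ i : ℕ, ∫ t in a i..a (i+1), (t - a i) ^ p
      = (1/(2*(n:ℝ)))^(p+1)/(p+1) := by
    intro i
    rw [intervalIntegral.integral_comp_sub_right (fun s => s ^ p) (a i), sub_self, hlen i]
    exact hbase
  have hodd_int : ∀ i : ℕ, ∫ t in a i..a (i+1), (a (i+1) - t) ^ p
      = (1/(2*(n:ℝ)))^(p+1)/(p+1) := by
    intro i
    rw [intervalIntegral.integral_comp_sub_left (fun s => s ^ p) (a (i+1)), sub_self, hlen i]
    exact hbase
  have hcont_sub : ∀ c : ℝ, Continuous fun t : ℝ => (t - c) ^ p := by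
    intro c; exact hrpow_cont.comp (by fun_prop)
  have hcont_sub' : ∀ c : ℝ, Continuous fun t : ℝ => (c - t) ^ p := by
    intro c; exact hrpow_cont.comp (by fun_prop)
  -- pointwise lower bounds
  have lb_even : ∀ (m k : ℕ) (t : ℝ), t ≤ (k:ℝ)/n + 1/(2*n) →
      t - (k:ℝ)/n ≤ |(m:ℝ)/n - t| := by
    intro m k t ht
    have h3 : (1:ℝ)/(2*n) = (1/n)/2 := by ring
    rcases le_or_gt m k with h | h
    · have hc : (m:ℝ) ≤ (k:ℝ) := by exact_mod_cast h
      have h1 : (m:ℝ)/n ≤ (k:ℝ)/n := by gcongr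
      calc t - (k:ℝ)/n ≤ t - (m:ℝ)/n := by linarith
      _ ≤ |t - (m:ℝ)/n| := le_abs_self _
      _ = |(m:ℝ)/n - t| := abs_sub_comm _ _
    · have hc : ((k:ℝ)+1) ≤ (m:ℝ) := by exact_mod_cast h
      have h1 : ((k:ℝ)+1)/n ≤ (m:ℝ)/n := by gcongr
      have h2 : ((k:ℝ)+1)/n = (k:ℝ)/n + 1/n := by ring
      calc t - (k:ℝ)/n ≤ (m:ℝ)/n - t := by linarith
      _ ≤ |(m:ℝ)/n - t| := le_abs_self _
  have lb_odd : ∀ (m k : ℕ) (t : ℝ), (k:ℝ)/n + 1/(2*n) ≤ t →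
      (k:ℝ)/n + 1/n - t ≤ |(m:ℝ)/n - t| := by
    intro m k t ht
    have h3 : (1:ℝ)/(2*n) = (1/n)/2 := by ring
    rcases le_or_gt m k with h | h
    · have hc : (m:ℝ) ≤ (k:ℝ) := by exact_mod_cast h
      have h1 : (m:ℝ)/n ≤ (k:ℝ)/n := by gcongr
      calc (k:ℝ)/n + 1/n - t ≤ t - (m:ℝ)/n := by linarith
      _ ≤ |t - (m:ℝ)/n| := le_abs_self _
      _ = |(m:ℝ)/n - t| := abs_sub_comm _ _
    · have hc : ((k:ℝ)+1) ≤ (m:ℝ) := by exact_mod_cast h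
      have h1 : ((k:ℝ)+1)/n ≤ (m:ℝ)/n := by gcongr
      have h2 : ((k:ℝ)+1)/n = (k:ℝ)/n + 1/n := by ring
      calc (k:ℝ)/n + 1/n - t ≤ (m:ℝ)/n - t := by linarith
      _ ≤ |(m:ℝ)/n - t| := le_abs_self _
  -- lower bound on each piece
  have lb_piece : ∀ (x : Fin n → ℝ) (i : ℕ), i < 2*n →
      (1/(2*(n:ℝ)))^(p+1)/(p+1) ≤ ∫ t in a i..a (i+1),
        |((Finset.univ.filter (fun j : Fin n => x j < t)).card : ℝ) / n - t| ^ p := by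
    intro x i hi
    rcases Nat.even_or_odd i with ⟨k, hk⟩ | ⟨k, hk⟩
    · have hik : i = 2*k := by omega
      subst hik
      rw [← heven_int (2*k)]
      refine intervalIntegral.integral_mono_on (ha_le _)
        ((hcont_sub (a (2*k))).intervalIntegrable _ _)
        (hii x _ _ (haIcc _ (by omega)) (haIcc _ (by omega))) ?_
      intro t ht
      have h1 : 0 ≤ t - a (2*k) := sub_nonneg.2 ht.1
      refine Real.rpow_le_rpow h1 ?_ hp0.le
      have hb := lb_even ((Finset.univ.filter (fun j : Fin n => x j < t)).card) k t
        (by rw [← haodd k]; exact ht.2)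
      rw [haeven k]
      exact hb
    · subst hk
      rw [← hodd_int (2*k+1)]
      refine intervalIntegral.integral_mono_on (ha_le _)
        ((hcont_sub' (a (2*k+1+1))).intervalIntegrable _ _)
        (hii x _ _ (haIcc _ (by omega)) (haIcc _ (by omega))) ?_
      intro t ht
      have h1 : 0 ≤ a (2*k+1+1) - t := sub_nonneg.2 ht.2
      refine Real.rpow_le_rpow h1 ?_ hp0.le
      have hb := lb_odd ((Finset.univ.filter (fun j : Fin n => x j < t)).card) k t
        (by rw [← haodd k]; exact ht.1)
      rw [show a (2*k+1+1) = (k:ℝ)/n + 1/n from haodd2 k]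
      exact hb
  -- sum algebra
  have hp1 : p + 1 ≠ 0 := by linarith
  have halg : ∑ _i ∈ Finset.range (2*n), (1/(2*(n:ℝ)))^(p+1)/(p+1)
      = (1/(2*(n:ℝ)))^p/(p+1) := by
    rw [Finset.sum_const, Finset.card_range, nsmul_eq_mul,
      Real.rpow_add (by positivity) p 1, Real.rpow_one]
    push_cast
    field_simp
  -- lower bound on the full integral
  have part1' : ∀ x : Fin n → ℝ,
      (1/(2*(n:ℝ)))^p/(p+1) ≤ ∫ t in (0:ℝ)..1,
        |((Finset.univ.filter (fun j : Fin n => x j < t)).card : ℝ) / n - t| ^ p := by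
    intro x
    rw [hsplit x, ← halg]
    exact Finset.sum_le_sum (fun i hi => lb_piece x i (Finset.mem_range.1 hi))
  -- midpoint counting
  have conv1 : ∀ k : ℕ, (k:ℝ)/n + 1/(2*n) = (2*(k:ℝ)+1)/(2*n) := by
    intro k; field_simp
  have count1 : ∀ (k : ℕ), k ≤ n → ∀ t : ℝ, (k:ℝ)/n < t → t ≤ (k:ℝ)/n + 1/(2*n) →
      (Finset.univ.filter
        (fun j : Fin n => (2 * ((j : ℕ) : ℝ) + 1) / (2 * n) < t)).card = k := by
    intro k hk t ht1 ht2
    rw [← aux_card_lt n k hk]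
    congr 1
    apply Finset.filter_congr
    intro j _
    constructor
    · intro h
      have h2 : (2*((j:ℕ):ℝ)+1)/(2*(n:ℝ)) < (2*(k:ℝ)+1)/(2*n) :=
        lt_of_lt_of_le h (by rw [← conv1 k]; exact ht2)
      have h3 : (2*((j:ℕ):ℝ)+1) < 2*(k:ℝ)+1 := (div_lt_div_iff_of_pos_right h2N).1 h2
      have h4 : 2*(j:ℕ)+1 < 2*k+1 := by exact_mod_cast h3
      omega
    · intro h
      have h3 : (2*((j:ℕ):ℝ)+1) < 2*(k:ℝ) := by
        have : 2*(j:ℕ)+1 < 2*k := by omega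
        exact_mod_cast this
      calc (2*((j:ℕ):ℝ)+1)/(2*(n:ℝ)) < (2*(k:ℝ))/(2*n) :=
            (div_lt_div_iff_of_pos_right h2N).2 h3
      _ = (k:ℝ)/n := by rw [mul_div_mul_left _ _ (two_ne_zero)]
      _ < t := ht1
  have count2 : ∀ (k : ℕ), k + 1 ≤ n → ∀ t : ℝ, (k:ℝ)/n + 1/(2*n) < t → t ≤ (k:ℝ)/n + 1/n →
      (Finset.univ.filter
        (fun j : Fin n => (2 * ((j : ℕ) : ℝ) + 1) / (2 * n) < t)).card = k + 1 := by
    intro k hk t ht1 ht2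
    rw [← aux_card_lt n (k+1) hk]
    congr 1
    apply Finset.filter_congr
    intro j _
    constructor
    · intro h
      have hconv : (k:ℝ)/n + 1/n = (2*(k:ℝ)+2)/(2*n) := by field_simp
      have h2 : (2*((j:ℕ):ℝ)+1)/(2*(n:ℝ)) < (2*(k:ℝ)+2)/(2*n) :=
        lt_of_lt_of_le h (by rw [← hconv]; exact ht2)
      have h3 : (2*((j:ℕ):ℝ)+1) < 2*(k:ℝ)+2 := (div_lt_div_iff_of_pos_right h2N).1 h2
      have h4 : 2*(j:ℕ)+1 < 2*k+2 := by exact_mod_cast h3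
      omega
    · intro h
      have h3 : (2*((j:ℕ):ℝ)+1) ≤ 2*(k:ℝ)+1 := by
        have : 2*(j:ℕ)+1 ≤ 2*k+1 := by omega
        exact_mod_cast this
      calc (2*((j:ℕ):ℝ)+1)/(2*(n:ℝ)) ≤ (2*(k:ℝ)+1)/(2*n) := by gcongr
      _ = (k:ℝ)/n + 1/(2*n) := (conv1 k).symm
      _ < t := ht1
  -- exact value on each piece for the midpoint configuration
  have mid_piece : ∀ i : ℕ, i < 2*n →
      (∫ t in a i..a (i+1),
        |((Finset.univ.filter
          (fun j : Fin n => (2 * ((j : ℕ) : ℝ) + 1) / (2 * n) < t)).card : ℝ) / n - t| ^ p)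
      = (1/(2*(n:ℝ)))^(p+1)/(p+1) := by
    intro i hi
    rcases Nat.even_or_odd i with ⟨k, hk⟩ | ⟨k, hk⟩
    · have hik : i = 2*k := by omega
      subst hik
      have hkn : k ≤ n := by omega
      rw [← heven_int (2*k)]
      apply intervalIntegral.integral_congr_ae
      rw [Set.uIoc_of_le (ha_le _)]
      refine Filter.Eventually.of_forall ?_
      intro t ht
      have ht1 : a (2*k) < t := ht.1
      have ht2 : t ≤ a (2*k+1) := ht.2
      rw [haeven k] at ht1
      rw [haodd k] at ht2
      rw [count1 k hkn t ht1 ht2, haeven k, abs_sub_comm,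
        abs_of_nonneg (by linarith : (0:ℝ) ≤ t - (k:ℝ)/n)]
    · subst hk
      have hkn : k + 1 ≤ n := by omega
      rw [← hodd_int (2*k+1)]
      apply intervalIntegral.integral_congr_ae
      rw [Set.uIoc_of_le (ha_le _)]
      refine Filter.Eventually.of_forall ?_
      intro t ht
      have ht1 : a (2*k+1) < t := ht.1
      have ht2 : t ≤ a (2*k+1+1) := ht.2
      rw [haodd k] at ht1
      rw [show a (2*k+1+1) = (k:ℝ)/n + 1/n from haodd2 k] at ht2
      rw [count2 k hkn t ht1 ht2,
        show a (2*k+1+1) = (k:ℝ)/n + 1/n from haodd2 k]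
      have h3 : (1:ℝ)/(2*n) = (1/n)/2 := by ring
      rw [abs_of_nonneg (by
        push_cast
        have h2 : ((k:ℝ)+1)/n = (k:ℝ)/n + 1/n := by ring
        linarith : (0:ℝ) ≤ ((k+1:ℕ):ℝ)/n - t)]
      push_cast
      ring_nf
  have part2' : (∫ t in (0:ℝ)..1,
      |((Finset.univ.filter
        (fun j : Fin n => (2 * ((j : ℕ) : ℝ) + 1) / (2 * n) < t)).card : ℝ) / n - t| ^ p)
      = (1/(2*(n:ℝ)))^p/(p+1) := by
    rw [hsplit (fun j : Fin n => (2 * ((j : ℕ) : ℝ) + 1) / (2 * n)), ← halg]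
    exact Finset.sum_congr rfl (fun i hi => mid_piece i (Finset.mem_range.1 hi))
  -- final algebra
  have hLpos : (0:ℝ) < (1/(2*(n:ℝ)))^p/(p+1) := by positivity
  have hfinal : ((1/(2*(n:ℝ)))^p/(p+1))^(1/p) = 1/(2*(p+1)^(1/p)*(n:ℝ)) := by
    rw [Real.div_rpow (by positivity) (by linarith), ← Real.rpow_mul (by positivity),
      mul_one_div_cancel hp0.ne', Real.rpow_one]
    have hq : (0:ℝ) < (p+1)^(1/p) := Real.rpow_pos_of_pos (by linarith) _
    field_simp
  constructor
  · intro x _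
    rw [← hfinal]
    exact Real.rpow_le_rpow hLpos.le (part1' x) (by positivity)
  · rw [part2', hfinal]
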